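/- arXiv:1208.0856 — 5 statements merged into one kernel-verified Lean document; each statement's English description precedes it below -/
import Mathlib

section
/- Let φ : G → C(X) be a finitely supported function, and let A = Σ_{g ∈ G} λ_μ(φ_g) ∘ U_g ∈ B(H_μ) (a finite sum). Then for every h ∈ G, ‖(1 − P)(A(δ_h ⊗ 1_X))‖² = Σ_{g ∈ G} σ_G(φ_g)(g h)², where δ_h ⊗ 1_X ∈ H_μ is the family whose coordinate at h is the constant function 1 on X and whose other coordinates are 0. In particular ‖(1 − P)(A(δ_h ⊗ 1_X))‖ ≥ σ_G(φ_e)(h), where e is the identity of G. -/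
open MeasureTheory Filter Topology

noncomputable section

/-- The Hilbert space `H_μ = ℓ²(G, L²(X,μ))`. -/
abbrev regularRepSpace (G : Type*) {X : Type*} [MeasurableSpace X] (μ : Measure X) :=
  lp (fun _ : G => Lp ℂ 2 μ) 2

/-- The `G`-deviation of a continuous function `φ` with respect to `μ`:
`σ_G(φ)(g) = ( ∫ |φ(g·x)|² dμ − |∫ φ(g·x) dμ|² )^(1/2)`. -/
def gDeviation {G X : Type*} [Group G] [TopologicalSpace X] [MulAction G X]
    [MeasurableSpace X] (μ : Measure X) (φ : C(X, ℂ)) (g : G) : ℝ :=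
  Real.sqrt ((∫ x, ‖φ (g • x)‖ ^ 2 ∂μ) - ‖∫ x, φ (g • x) ∂μ‖ ^ 2)

private lemma myL2_norm_sq {α : Type*} [MeasurableSpace α] {μ : Measure α} (f : Lp ℂ 2 μ) :
    ‖f‖ ^ 2 = ∫ x, ‖(f : α → ℂ) x‖ ^ 2 ∂μ := by
  have h1 : (‖f‖ : ℝ) ^ 2 = RCLike.re (inner (𝕜 := ℂ) f f) :=
    (inner_self_eq_norm_sq (𝕜 := ℂ) f).symm
  rw [h1, MeasureTheory.L2.inner_def, ← integral_re (MeasureTheory.L2.integrable_inner f f)]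
  refine integral_congr_ae (Eventually.of_forall fun x => ?_)
  exact inner_self_eq_norm_sq (𝕜 := ℂ) _

private lemma myLp_coeFn_finsetSum {α E ι : Type*} [MeasurableSpace α] {μ : Measure α}
    [NormedAddCommGroup E] {p : ENNReal} (s : Finset ι) (f : ι → Lp E p μ) :
    ⇑(∑ i ∈ s, f i) =ᵐ[μ] fun x => ∑ i ∈ s, (f i : α → E) x := by
  classical
  induction s using Finset.cons_induction with
  | empty =>
    simp only [Finset.sum_empty]
    exact MeasureTheory.Lp.coeFn_zero E p μ
  | cons i s hi ih =>
      rw [Finset.sum_cons]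
      refine (MeasureTheory.Lp.coeFn_add _ _).trans ?_
      filter_upwards [ih] with x hx
      simp only [Pi.add_apply, Finset.sum_apply, Finset.sum_insert hi, Finset.sum_cons]
      rw [hx]

private lemma myVariance_eq {α : Type*} [MeasurableSpace α] {μ : Measure α}
    [IsProbabilityMeasure μ] {f : α → ℂ} (hf1 : Integrable f μ)
    (hf2 : Integrable (fun x => ‖f x‖ ^ 2) μ)
    (g : Lp ℂ 2 μ) (hg : (g : α → ℂ) =ᵐ[μ] fun x => f x - ∫ y, f y ∂μ) :
    ‖g‖ ^ 2 = (∫ x, ‖f x‖ ^ 2 ∂μ) - ‖∫ x, f x ∂μ‖ ^ 2 := by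
  set m := ∫ y, f y ∂μ with hm
  have expand : ∀ a : ℂ, ‖a - m‖ ^ 2
      = ‖a‖ ^ 2 - 2 * ((starRingEnd ℂ) m * a).re + ‖m‖ ^ 2 := by
    intro a
    simp only [Complex.sq_norm, Complex.normSq_apply, Complex.sub_re,
      Complex.sub_im, Complex.mul_re, Complex.conj_re, Complex.conj_im]
    ring
  have hre : Integrable (fun x => ((starRingEnd ℂ) m * f x).re) μ :=
    (hf1.const_mul _).re
  have hconst : Integrable (fun _ : α => ‖m‖ ^ 2) μ := integrable_const _
  calc ‖g‖ ^ 2 = ∫ x, ‖(g : α → ℂ) x‖ ^ 2 ∂μ := myL2_norm_sq g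
    _ = ∫ x, ‖f x - m‖ ^ 2 ∂μ :=
        integral_congr_ae (hg.mono fun x hx => by dsimp only; rw [hx])
    _ = ∫ x, (‖f x‖ ^ 2 - 2 * ((starRingEnd ℂ) m * f x).re + ‖m‖ ^ 2) ∂μ := by
        simp_rw [expand]
    _ = (∫ x, (‖f x‖ ^ 2 - 2 * ((starRingEnd ℂ) m * f x).re) ∂μ) + ∫ _, ‖m‖ ^ 2 ∂μ :=
        integral_add (hf2.sub (hre.const_mul 2)) hconst
    _ = ((∫ x, ‖f x‖ ^ 2 ∂μ) - ∫ x, 2 * ((starRingEnd ℂ) m * f x).re ∂μ) + ‖m‖ ^ 2 := by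
        rw [integral_sub hf2 (hre.const_mul 2)]
        simp
    _ = (∫ x, ‖f x‖ ^ 2 ∂μ) - ‖m‖ ^ 2 := by
        rw [integral_const_mul]
        have h1 : ∫ x, ((starRingEnd ℂ) m * f x).re ∂μ
            = (((starRingEnd ℂ) m) * m).re := by
          have h2 : ∫ x, (starRingEnd ℂ) m * f x ∂μ = (starRingEnd ℂ) m * m := by
            rw [integral_const_mul]
          calc ∫ x, ((starRingEnd ℂ) m * f x).re ∂μ
              = (∫ x, (starRingEnd ℂ) m * f x ∂μ).re := by
                simpa using integral_re (hf1.const_mul ((starRingEnd ℂ) m))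
            _ = (((starRingEnd ℂ) m) * m).re := by rw [h2]
        rw [h1]
        have h3 : (((starRingEnd ℂ) m) * m).re = ‖m‖ ^ 2 := by
          simp only [Complex.mul_re, Complex.conj_re, Complex.conj_im,
            Complex.sq_norm, Complex.normSq_apply]
          ring
        rw [h3]
        ring

set_option maxHeartbeats 2000000 in
/-- For a finitely supported `φ : G → C(X)` and `A = Σ_g λ_μ(φ_g) U_g`, the square of
the norm of `(1 − P)(A(δ_h ⊗ 1_X))` equals `Σ_g σ_G(φ_g)(g h)²`; in particular it is
at least `σ_G(φ_e)(h)²` where `e` is the identity of `G`. -/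
theorem norm_sq_one_sub_P_on_delta
    {G X : Type*} [Group G] [Countable G]
    [TopologicalSpace X] [CompactSpace X] [TopologicalSpace.MetrizableSpace X]
    [MeasurableSpace X] [BorelSpace X]
    [MulAction G X] [ContinuousConstSMul G X]
    (μ : Measure X) [IsProbabilityMeasure μ]
    (Λ : C(X, ℂ) → (regularRepSpace G μ →L[ℂ] regularRepSpace G μ))
    (U : G → (regularRepSpace G μ →L[ℂ] regularRepSpace G μ))
    (P : regularRepSpace G μ →L[ℂ] regularRepSpace G μ)
    (hΛ : ∀ (φ₀ : C(X, ℂ)) (ψ : regularRepSpace G μ) (g : G),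
      (Λ φ₀ ψ g : X → ℂ) =ᵐ[μ] fun x => φ₀ (g • x) * (ψ g : X → ℂ) x)
    (hU : ∀ (h : G) (ψ : regularRepSpace G μ) (g : G), U h ψ g = ψ (h⁻¹ * g))
    (hP : ∀ (ψ : regularRepSpace G μ) (g : G),
      (P ψ g : X → ℂ) =ᵐ[μ] fun _ => ∫ x, (ψ g : X → ℂ) x ∂μ)
    (φ : G → C(X, ℂ)) (hφ : (Function.support φ).Finite)
    (A : regularRepSpace G μ →L[ℂ] regularRepSpace G μ)
    (hA : A = ∑ g ∈ hφ.toFinset, Λ (φ g) ∘L U g)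
    (h : G) (e : regularRepSpace G μ)
    (he₁ : (e h : X → ℂ) =ᵐ[μ] fun _ => (1 : ℂ))
    (he₂ : ∀ g : G, g ≠ h → e g = 0) :
    ‖((1 : regularRepSpace G μ →L[ℂ] regularRepSpace G μ) - P) (A e)‖ ^ 2
        = ∑' g : G, gDeviation μ (φ g) (g * h) ^ 2 ∧
      gDeviation μ (φ 1) h
        ≤ ‖((1 : regularRepSpace G μ →L[ℂ] regularRepSpace G μ) - P) (A e)‖ := by
  classical
  set S := hφ.toFinset with hS
  set B := ((1 : regularRepSpace G μ →L[ℂ] regularRepSpace G μ) - P) (A e) with hB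
  -- coordinate formula for A e
  have hAe : ∀ k : G, ((A e k : X → ℂ)) =ᵐ[μ] fun x => φ (k * h⁻¹) (k • x) := by
    intro k
    have h1 : A e k = ∑ g ∈ S, Λ (φ g) (U g e) k := by
      rw [hA, ContinuousLinearMap.sum_apply, lp.coeFn_sum, Finset.sum_apply]
      rfl
    have hterm : ∀ g ∈ S, ((Λ (φ g) (U g e) k : X → ℂ))
        =ᵐ[μ] fun x => if g = k * h⁻¹ then φ g (k • x) else 0 := by
      intro g _
      refine (hΛ (φ g) (U g e) k).trans ?_
      rw [hU g e k]
      by_cases hg : g = k * h⁻¹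
      · have hgk : g⁻¹ * k = h := by rw [hg]; group
        rw [hgk]
        filter_upwards [he₁] with x hx
        rw [hx]
        simp [hg]
      · have hne : g⁻¹ * k ≠ h := by
          intro hc
          apply hg
          rw [← hc]; group
        rw [he₂ _ hne]
        filter_upwards [MeasureTheory.Lp.coeFn_zero ℂ 2 μ] with x hx
        simp only [hx, Pi.zero_apply, mul_zero]
        simp [hg]
    have hall : ∀ᵐ x ∂μ, ∀ g ∈ S, ((Λ (φ g) (U g e) k : X → ℂ)) x
        = if g = k * h⁻¹ then φ g (k • x) else 0 :=
      (MeasureTheory.ae_ball_iff S.countable_toSet).2 hterm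
    have hsum : ((A e k : X → ℂ)) =ᵐ[μ] fun x => ∑ g ∈ S, ((Λ (φ g) (U g e) k : X → ℂ)) x := by
      rw [h1]
      exact myLp_coeFn_finsetSum S _
    filter_upwards [hsum, hall] with x hx hx2
    rw [hx, Finset.sum_congr rfl hx2, Finset.sum_ite_eq' S (k * h⁻¹) fun g => φ g (k • x)]
    by_cases hmem : k * h⁻¹ ∈ S
    · simp [hmem]
    · have hz : φ (k * h⁻¹) = 0 := by
        by_contra hne
        exact hmem (hφ.mem_toFinset.2 hne)
      simp [hmem, hz]
  -- coordinate formula for B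
  have hBk : ∀ k : G, ((B k : X → ℂ))
      =ᵐ[μ] fun x => φ (k * h⁻¹) (k • x) - ∫ y, φ (k * h⁻¹) (k • y) ∂μ := by
    intro k
    have h2 : B k = A e k - P (A e) k := by
      rw [hB]; rfl
    have h5 : (∫ x, ((A e k : X → ℂ)) x ∂μ) = ∫ y, φ (k * h⁻¹) (k • y) ∂μ :=
      integral_congr_ae (hAe k)
    rw [h2]
    filter_upwards [MeasureTheory.Lp.coeFn_sub (A e k) (P (A e) k), hAe k, hP (A e) k]
      with x hx hx1 hx2
    rw [hx, Pi.sub_apply, hx1, hx2, h5]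
  -- coordinate norms
  have hnorm : ∀ k : G, ‖B k‖ ^ 2
      = (∫ x, ‖φ (k * h⁻¹) (k • x)‖ ^ 2 ∂μ) - ‖∫ x, φ (k * h⁻¹) (k • x) ∂μ‖ ^ 2 := by
    intro k
    have hc : Continuous fun x : X => φ (k * h⁻¹) (k • x) :=
      (φ (k * h⁻¹)).continuous.comp (continuous_const_smul k)
    have hint1 : Integrable (fun x => φ (k * h⁻¹) (k • x)) μ :=
      hc.integrable_of_hasCompactSupport (HasCompactSupport.of_compactSpace _)
    have hint2 : Integrable (fun x => ‖φ (k * h⁻¹) (k • x)‖ ^ 2) μ :=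
      (hc.norm.pow 2).integrable_of_hasCompactSupport (HasCompactSupport.of_compactSpace _)
    exact myVariance_eq hint1 hint2 _ (hBk k)
  -- relation to gDeviation
  have hdev : ∀ g : G, gDeviation μ (φ g) (g * h) ^ 2 = ‖B (g * h)‖ ^ 2 := by
    intro g
    have hk : (g * h) * h⁻¹ = g := by group
    have hn := hnorm (g * h)
    rw [hk] at hn
    have h0 : 0 ≤ (∫ x, ‖φ g ((g * h) • x)‖ ^ 2 ∂μ) - ‖∫ x, φ g ((g * h) • x) ∂μ‖ ^ 2 := by
      rw [← hn]; positivity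
    rw [gDeviation, Real.sq_sqrt h0, hn]
  -- summability
  have h2R : (2 : ENNReal).toReal = 2 := by simp
  have hsummable : Summable fun k : G => ‖B k‖ ^ 2 := by
    have := (lp.memℓp B).summable (by rw [h2R]; norm_num)
    refine this.congr fun k => ?_
    rw [h2R, Real.rpow_two]
  -- total norm
  have htsum : ‖B‖ ^ 2 = ∑' k : G, ‖B k‖ ^ 2 := by
    have h2' : (0:ℝ) < (2 : ENNReal).toReal := by rw [h2R]; norm_num
    have hrp := lp.norm_rpow_eq_tsum h2' B
    rw [h2R] at hrp
    calc ‖B‖ ^ 2 = ‖B‖ ^ (2:ℝ) := (Real.rpow_two _).symm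
      _ = ∑' k : G, ‖B k‖ ^ (2:ℝ) := hrp
      _ = ∑' k : G, ‖B k‖ ^ 2 := tsum_congr fun k => Real.rpow_two _
  -- reindexing
  have hre : ∑' g : G, gDeviation μ (φ g) (g * h) ^ 2 = ∑' k : G, ‖B k‖ ^ 2 := by
    rw [tsum_congr hdev]
    exact (Equiv.mulRight h).tsum_eq fun k => ‖B k‖ ^ 2
  constructor
  · rw [htsum, hre]
  · have hle : gDeviation μ (φ 1) h ^ 2 ≤ ‖B‖ ^ 2 := by
      have h1 : gDeviation μ (φ 1) h ^ 2 = ‖B (1 * h)‖ ^ 2 := by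
        simpa using hdev 1
      rw [h1, htsum]
      exact Summable.le_tsum hsummable (1 * h) fun j _ => sq_nonneg _
    have hd : 0 ≤ gDeviation μ (φ 1) h := Real.sqrt_nonneg _
    nlinarith [norm_nonneg B]
end
end

section
/- Assume: every singleton {x} ⊆ X is μ-null; μ has full support (every nonempty open subset of X has positive μ-measure); and the diagonal action of G on X×X, g·(x,y) = (g·x, g·y), is ergodic with respect to μ×μ, meaning that every Borel set S ⊆ X×X satisfying g·S = S for all g ∈ G has (μ×μ)(S) = 0 or (μ×μ)(S) = 1. If φ: X → ℂ is a continuous function with Σ_{g ∈ G} σ_G(φ)(g)² < ∞, then φ is constant. -/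
open MeasureTheory Filter Topology
open scoped ENNReal NNReal

noncomputable section

lemma normsq_expand (a b : ℂ) :
    ‖a - b‖ ^ 2 = ‖a‖ ^ 2 - 2 * (a * (starRingEnd ℂ) b).re + ‖b‖ ^ 2 := by
  have h : ∀ z : ℂ, ‖z‖ ^ 2 = Complex.normSq z := fun z => by
    exact Complex.sq_norm z
  simp only [h, Complex.normSq_apply, Complex.mul_re, Complex.conj_re, Complex.conj_im,
    Complex.sub_re, Complex.sub_im]
  ring

lemma var_eq {X : Type*} [MeasurableSpace X]
    (μ : Measure X) [IsProbabilityMeasure μ] {f : X → ℂ}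
    (hf : Integrable f μ) (hf2 : Integrable (fun x => ‖f x‖ ^ 2) μ) :
    ∫ x, ‖f x - ∫ y, f y ∂μ‖ ^ 2 ∂μ = (∫ x, ‖f x‖ ^ 2 ∂μ) - ‖∫ y, f y ∂μ‖ ^ 2 := by
  set m := ∫ y, f y ∂μ with hm
  have hint : Integrable (fun x => (f x * (starRingEnd ℂ) m).re) μ :=
    (hf.mul_const _).re
  have h1 : ∀ x, ‖f x - m‖ ^ 2
      = ‖f x‖ ^ 2 - 2 * (f x * (starRingEnd ℂ) m).re + ‖m‖ ^ 2 :=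
    fun x => normsq_expand _ _
  have h2 : ∫ x, (f x * (starRingEnd ℂ) m).re ∂μ = ‖m‖ ^ 2 := by
    have h3 := (integral_re (hf.mul_const ((starRingEnd ℂ) m))).symm
    simp only [RCLike.re_to_complex] at h3
    rw [← h3, integral_mul_const, ← hm, Complex.mul_conj]
    simp [← Complex.sq_norm, ← Complex.ofReal_pow]
  calc ∫ x, ‖f x - m‖ ^ 2 ∂μ
      = ∫ x, (‖f x‖ ^ 2 - 2 * (f x * (starRingEnd ℂ) m).re) + ‖m‖ ^ 2 ∂μ :=
        integral_congr_ae (Filter.Eventually.of_forall fun x => by dsimp only; rw [h1 x])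
    _ = (∫ x, ‖f x‖ ^ 2 - 2 * (f x * (starRingEnd ℂ) m).re ∂μ) + ∫ _x, ‖m‖ ^ 2 ∂μ :=
        integral_add (hf2.sub (hint.const_mul 2)) (integrable_const _)
    _ = ((∫ x, ‖f x‖ ^ 2 ∂μ) - ∫ x, 2 * (f x * (starRingEnd ℂ) m).re ∂μ) + ‖m‖ ^ 2 := by
        rw [integral_sub hf2 (hint.const_mul 2)]; simp
    _ = (∫ x, ‖f x‖ ^ 2 ∂μ) - ‖m‖ ^ 2 := by
        rw [integral_const_mul, h2]; ring

lemma cont_integrable {X E : Type*} [TopologicalSpace X] [CompactSpace X]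
    [TopologicalSpace.MetrizableSpace X] [MeasurableSpace X] [BorelSpace X]
    [NormedAddCommGroup E] {μ : Measure X} [IsFiniteMeasure μ] {f : X → E}
    (hf : Continuous f) : Integrable f μ :=
  hf.integrable_of_hasCompactSupport ((isClosed_tsupport f).isCompact)

lemma sq_nnnorm_eq (z : ℂ) : ((‖z‖₊ : ℝ≥0∞))^2 = ENNReal.ofReal (‖z‖^2) := by
  rw [← ENNReal.ofReal_coe_nnreal, coe_nnnorm, ← ENNReal.ofReal_pow (norm_nonneg _)]

lemma sq_triangle (a b u : ℂ) :
    ((‖a - b‖₊ : ℝ≥0∞))^2 ≤ 2 * (‖a - u‖₊ : ℝ≥0∞)^2 + 2 * (‖u - b‖₊ : ℝ≥0∞)^2 := by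
  have tri : ‖a - b‖ ≤ ‖a - u‖ + ‖u - b‖ := by
    calc ‖a - b‖ = ‖(a - u) + (u - b)‖ := by rw [sub_add_sub_cancel]
    _ ≤ ‖a - u‖ + ‖u - b‖ := norm_add_le _ _
  have h : ‖a - b‖^2 ≤ 2 * ‖a - u‖^2 + 2 * ‖u - b‖^2 := by
    nlinarith [sq_nonneg (‖a - u‖ - ‖u - b‖), norm_nonneg (a - b), norm_nonneg (a - u), norm_nonneg (u - b), sq_nonneg (‖a - b‖)]
  calc ((‖a - b‖₊ : ℝ≥0∞))^2 = ENNReal.ofReal (‖a - b‖^2) := sq_nnnorm_eq _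
    _ ≤ ENNReal.ofReal (2 * ‖a - u‖^2 + 2 * ‖u - b‖^2) := ENNReal.ofReal_le_ofReal h
    _ = 2 * (‖a - u‖₊ : ℝ≥0∞)^2 + 2 * (‖u - b‖₊ : ℝ≥0∞)^2 := by
        rw [ENNReal.ofReal_add (by positivity) (by positivity),
          ENNReal.ofReal_mul (by norm_num), ENNReal.ofReal_mul (by norm_num),
          sq_nnnorm_eq, sq_nnnorm_eq, ENNReal.ofReal_ofNat]

set_option maxHeartbeats 2000000 in
/-- If points are `μ`-negligible, `μ` has full support, and the diagonal action of `G`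
on `X × X` is ergodic for `μ × μ`, then a continuous function whose `G`-deviation is
square-summable must be constant. In particular, `ℓ^p`-deviation forces `p > 2`. -/
theorem const_of_sq_summable_deviation
    {G X : Type*} [Group G] [Countable G]
    [TopologicalSpace X] [CompactSpace X] [TopologicalSpace.MetrizableSpace X]
    [MeasurableSpace X] [BorelSpace X]
    [MulAction G X] [ContinuousConstSMul G X]
    (μ : Measure X) [IsProbabilityMeasure μ]
    (hpoints : ∀ x : X, μ {x} = 0)
    (hsupp : ∀ U : Set X, IsOpen U → U.Nonempty → 0 < μ U)
    (hergodic : ∀ S : Set (X × X), MeasurableSet S →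
      (∀ g : G, (fun p : X × X => (g • p.1, g • p.2)) '' S = S) →
      (μ.prod μ) S = 0 ∨ (μ.prod μ) S = 1)
    (φ : C(X, ℂ)) (hφ : Summable fun g : G => gDeviation μ φ g ^ 2) :
    ∃ c : ℂ, ∀ x : X, φ x = c := by
    classical
  rcases isEmpty_or_nonempty X with hempty | hne
  · exact ⟨0, fun x => (hempty.false x).elim⟩
  set m : G → ℂ := fun g => ∫ x, φ (g • x) ∂μ with hm_def
  set ψ : G → X → ℂ := fun g x => φ (g • x) - m g with hψ_def
  have hcontg : ∀ g : G, Continuous fun x : X => φ (g • x) :=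
    fun g => φ.continuous.comp (continuous_const_smul g)
  have hψcont : ∀ g : G, Continuous (ψ g) := fun g => (hcontg g).sub continuous_const
  have hint1 : ∀ g : G, Integrable (fun x => φ (g • x)) μ := fun g => cont_integrable (hcontg g)
  have hint2 : ∀ g : G, Integrable (fun x => ‖φ (g • x)‖ ^ 2) μ :=
    fun g => cont_integrable ((hcontg g).norm.pow 2)
  have hintψ2 : ∀ g : G, Integrable (fun x => ‖ψ g x‖ ^ 2) μ :=
    fun g => cont_integrable ((hψcont g).norm.pow 2)
  have hvar : ∀ g : G, ∫ x, ‖ψ g x‖ ^ 2 ∂μ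
      = (∫ x, ‖φ (g • x)‖ ^ 2 ∂μ) - ‖∫ x, φ (g • x) ∂μ‖ ^ 2 :=
    fun g => var_eq μ (hint1 g) (hint2 g)
  have hV : ∀ g : G, gDeviation μ φ g ^ 2 = ∫ x, ‖ψ g x‖ ^ 2 ∂μ := by
    intro g
    have hnn : 0 ≤ (∫ x, ‖φ (g • x)‖ ^ 2 ∂μ) - ‖∫ x, φ (g • x) ∂μ‖ ^ 2 := by
      rw [← hvar g]; exact integral_nonneg fun x => sq_nonneg _
    rw [gDeviation, Real.sq_sqrt hnn, hvar g]
  have hsumV : Summable (fun g : G => ∫ x, ‖ψ g x‖ ^ 2 ∂μ) := hφ.congr hV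
  -- the ℓ²-mass function T
  set T : X → ℝ≥0∞ := fun x => ∑' g : G, (‖ψ g x‖₊ : ℝ≥0∞) ^ 2 with hT_def
  have hTmeas : Measurable T :=
    Measurable.ennreal_tsum fun g =>
      ((hψcont g).nnnorm.measurable.coe_nnreal_ennreal).pow_const 2
  have hlint : ∀ g : G, ∫⁻ x, (‖ψ g x‖₊ : ℝ≥0∞) ^ 2 ∂μ = ENNReal.ofReal (∫ x, ‖ψ g x‖ ^ 2 ∂μ) := by
    intro g
    rw [lintegral_congr fun x => sq_nnnorm_eq (ψ g x)]
    exact (ofReal_integral_eq_lintegral_ofReal (hintψ2 g)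
      (Filter.Eventually.of_forall fun x => sq_nonneg _)).symm
  have hTlint : ∫⁻ x, T x ∂μ ≠ ⊤ := by
    rw [hT_def]
    rw [lintegral_tsum fun g =>
      (((hψcont g).nnnorm.measurable.coe_nnreal_ennreal).pow_const 2).aemeasurable]
    have : ∑' g : G, ∫⁻ x, (‖ψ g x‖₊ : ℝ≥0∞) ^ 2 ∂μ
        = ENNReal.ofReal (∑' g : G, ∫ x, ‖ψ g x‖ ^ 2 ∂μ) := by
      rw [tsum_congr hlint]
      exact (ENNReal.ofReal_tsum_of_nonneg (fun g => integral_nonneg fun x => sq_nonneg _)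
        hsumV).symm
    rw [this]
    exact ENNReal.ofReal_ne_top
  have hTae : ∀ᵐ x ∂μ, T x < ⊤ := ae_lt_top hTmeas hTlint
  -- The invariant function F
  set F : X × X → ℝ≥0∞ :=
    fun p => ∑' g : G, (‖φ (g • p.1) - φ (g • p.2)‖₊ : ℝ≥0∞) ^ 2 with hF_def
  have hFmeas : Measurable F := by
    refine Measurable.ennreal_tsum fun g => ?_
    have hc : Continuous fun p : X × X => φ (g • p.1) - φ (g • p.2) :=
      (φ.continuous.comp ((continuous_const_smul g).comp continuous_fst)).sub
        (φ.continuous.comp ((continuous_const_smul g).comp continuous_snd))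
    exact (hc.nnnorm.measurable.coe_nnreal_ennreal).pow_const 2
  have hFinv : ∀ (g : G) (p : X × X), F (g • p.1, g • p.2) = F p := by
    intro g p
    have := (Equiv.mulRight g).tsum_eq
      (fun h : G => (‖φ (h • p.1) - φ (h • p.2)‖₊ : ℝ≥0∞) ^ 2)
    simpa [Equiv.coe_mulRight, mul_smul] using this
  have hFψ : ∀ p : X × X, F p = ∑' g : G, (‖ψ g p.1 - ψ g p.2‖₊ : ℝ≥0∞) ^ 2 := by
    intro p
    refine tsum_congr fun g => ?_
    rw [hψ_def]; dsimp only; rw [sub_sub_sub_cancel_right]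
  -- the key ergodicity step
  have hKey : ∀ ε : ℝ, 0 < ε → (μ.prod μ) {p : X × X | ENNReal.ofReal ε < F p} = 0 := by
    intro ε hε
    set S := {p : X × X | ENNReal.ofReal ε < F p} with hS_def
    have hSmeas : MeasurableSet S := hFmeas measurableSet_Ioi
    have hSinv : ∀ g : G, (fun p : X × X => (g • p.1, g • p.2)) '' S = S := by
      intro g
      ext q
      constructor
      · rintro ⟨p, hp, rfl⟩
        simpa [hS_def, Set.mem_setOf_eq, hFinv g p] using hp
      · intro hq
        refine ⟨(g⁻¹ • q.1, g⁻¹ • q.2), ?_, ?_⟩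
        · have := hFinv g⁻¹ q
          simpa [hS_def, Set.mem_setOf_eq, this] using hq
        · simp
      
    rcases hergodic S hSmeas hSinv with h0 | h1
    · exact h0
    exfalso
    obtain ⟨D, hDc, hDd⟩ := TopologicalSpace.exists_countable_dense ℂ
    haveI := hDc.to_subtype
    set u : ((s : Finset G) × ({g // g ∈ s} → D)) → G → ℂ :=
      fun i g => if h : g ∈ i.1 then (i.2 ⟨g, h⟩ : ℂ) else 0 with hu_def
    set A : ((s : Finset G) × ({g // g ∈ s} → D)) → Set X := fun i =>
      {x | ∑' g : G, (‖ψ g x - u i g‖₊ : ℝ≥0∞) ^ 2 < ENNReal.ofReal (ε/8)} with hA_def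
    have hAmeas : ∀ i, MeasurableSet (A i) := by
      intro i
      have hm : Measurable fun x => ∑' g : G, (‖ψ g x - u i g‖₊ : ℝ≥0∞) ^ 2 :=
        Measurable.ennreal_tsum fun g =>
          ((((hψcont g).sub continuous_const).nnnorm.measurable).coe_nnreal_ennreal).pow_const 2
      exact hm measurableSet_Iio
    have hcover : ∀ x : X, T x < ⊤ → ∃ i, x ∈ A i := by
      intro x hx
      have htail := ENNReal.tendsto_tsum_compl_atTop_zero
        (f := fun g : G => (‖ψ g x‖₊ : ℝ≥0∞) ^ 2) hx.ne
      have hε16 : (0:ℝ≥0∞) < ENNReal.ofReal (ε/16) := ENNReal.ofReal_pos.mpr (by positivity)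
      obtain ⟨s, hs⟩ := (htail.eventually_lt_const hε16).exists
      set t : ℝ := ε/(16*(s.card+1)) with ht_def
      have ht : 0 < t := by positivity
      have hr : 0 < Real.sqrt t := Real.sqrt_pos.mpr ht
      have hchoice : ∀ g : {g // g ∈ s}, ∃ dd : D, ‖ψ (g : G) x - (dd : ℂ)‖ < Real.sqrt t := by
        intro g
        obtain ⟨y, hyD, hy⟩ := hDd.exists_dist_lt (ψ (g : G) x) hr
        exact ⟨⟨y, hyD⟩, by rwa [← dist_eq_norm]⟩
      choose v hv using hchoice
      refine ⟨⟨s, v⟩, ?_⟩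
      have hterm : ∀ g : G, (‖ψ g x - u ⟨s, v⟩ g‖₊ : ℝ≥0∞) ^ 2
          ≤ (if g ∈ s then ENNReal.ofReal t else (‖ψ g x‖₊ : ℝ≥0∞) ^ 2) := by
        intro g
        by_cases hgs : g ∈ s
        · simp only [hgs, if_true, hu_def, dif_pos]
          have hlt : ‖ψ g x - (v ⟨g, hgs⟩ : ℂ)‖ ^ 2 < t := by
            have := hv ⟨g, hgs⟩
            calc ‖ψ g x - (v ⟨g, hgs⟩ : ℂ)‖ ^ 2 < Real.sqrt t ^ 2 :=
                  pow_lt_pow_left₀ this (norm_nonneg _) two_ne_zero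
              _ = t := Real.sq_sqrt ht.le
          rw [sq_nnnorm_eq]
          exact (ENNReal.ofReal_le_ofReal hlt.le)
        · simp only [hu_def, dif_neg hgs, if_neg hgs, sub_zero]
          exact le_rfl
      have hsum_le : ∑' g : G, (‖ψ g x - u ⟨s, v⟩ g‖₊ : ℝ≥0∞) ^ 2
          ≤ (∑' g : G, (if g ∈ s then ENNReal.ofReal t else 0))
            + ∑' g : G, (if g ∈ s then 0 else (‖ψ g x‖₊ : ℝ≥0∞) ^ 2) := by
        rw [← ENNReal.tsum_add]
        refine ENNReal.tsum_le_tsum fun g => (hterm g).trans ?_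
        by_cases hgs : g ∈ s <;> simp [hgs]
      have hfin : (∑' g : G, (if g ∈ s then ENNReal.ofReal t else 0))
          ≤ ENNReal.ofReal (ε/16) := by
        rw [tsum_eq_sum (s := s) (fun g hg => by simp [hg])]
        have : ∑ g ∈ s, (if g ∈ s then ENNReal.ofReal t else 0) = s.card • ENNReal.ofReal t := by
          rw [Finset.sum_congr rfl fun g hg => if_pos hg, Finset.sum_const]
        rw [this, nsmul_eq_mul]
        calc (s.card : ℝ≥0∞) * ENNReal.ofReal t
            = ENNReal.ofReal ((s.card : ℝ) * t) := by
              rw [ENNReal.ofReal_mul (Nat.cast_nonneg _), ENNReal.ofReal_natCast]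
          _ ≤ ENNReal.ofReal (ε/16) := by
              apply ENNReal.ofReal_le_ofReal
              rw [ht_def]
              have h16 : (0:ℝ) < 16*((s.card:ℝ)+1) := by positivity
              rw [mul_comm, div_mul_eq_mul_div, div_le_div_iff₀ h16 (by norm_num : (0:ℝ) < 16)]
              nlinarith [Nat.cast_nonneg (α := ℝ) s.card, hε.le]
      have htail_eq : ∑' g : G, (if g ∈ s then 0 else (‖ψ g x‖₊ : ℝ≥0∞) ^ 2)
          = ∑' g : {g // g ∉ s}, (‖ψ (g : G) x‖₊ : ℝ≥0∞) ^ 2 := by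
        have h := tsum_subtype {g : G | g ∉ s} (fun g => (‖ψ g x‖₊ : ℝ≥0∞) ^ 2)
        refine Eq.trans ?_ h.symm
        refine tsum_congr fun g => ?_
        by_cases hgs : g ∈ s <;> simp [Set.indicator_apply, hgs]
      have htail_lt : ∑' g : G, (if g ∈ s then 0 else (‖ψ g x‖₊ : ℝ≥0∞) ^ 2)
          < ENNReal.ofReal (ε/16) := by rw [htail_eq]; exact hs
      have : ∑' g : G, (‖ψ g x - u ⟨s, v⟩ g‖₊ : ℝ≥0∞) ^ 2 < ENNReal.ofReal (ε/8) := by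
        refine lt_of_le_of_lt hsum_le ?_
        calc (∑' g : G, (if g ∈ s then ENNReal.ofReal t else 0))
            + ∑' g : G, (if g ∈ s then 0 else (‖ψ g x‖₊ : ℝ≥0∞) ^ 2)
            < ENNReal.ofReal (ε/16) + ENNReal.ofReal (ε/16) :=
              ENNReal.add_lt_add_of_le_of_lt
                (ne_top_of_le_ne_top ENNReal.ofReal_ne_top hfin) hfin htail_lt
          _ = ENNReal.ofReal (ε/8) := by
              rw [← ENNReal.ofReal_add (by positivity) (by positivity),
                show ε/16 + ε/16 = ε/8 by ring]
      exact this
    have hExists : ∃ i, μ (A i) ≠ 0 := by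
      by_contra hcontra
      push_neg at hcontra
      have hUnion : μ (⋃ i, A i) = 0 := measure_iUnion_null hcontra
      have hcompl : μ ((⋃ i, A i)ᶜ) = 0 := by
        refine measure_mono_null (fun x hx => ?_) (ae_iff.mp hTae)
        simp only [Set.mem_compl_iff, Set.mem_iUnion, not_exists] at hx
        simp only [Set.mem_setOf_eq, not_lt, top_le_iff]
        by_contra hT
        obtain ⟨i, hi⟩ := hcover x (lt_top_iff_ne_top.mpr hT)
        exact hx i hi
      have habsurd : (1:ℝ≥0∞) ≤ 0 := by
        calc (1:ℝ≥0∞) = μ Set.univ := measure_univ.symm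
          _ = μ ((⋃ i, A i) ∪ (⋃ i, A i)ᶜ) := by rw [Set.union_compl_self]
          _ ≤ μ (⋃ i, A i) + μ ((⋃ i, A i)ᶜ) := measure_union_le _ _
          _ = 0 := by rw [hUnion, hcompl, add_zero]
      exact absurd habsurd (by norm_num)
    obtain ⟨i, hi⟩ := hExists
    have hsub : (A i) ×ˢ (A i) ⊆ Sᶜ := by
      rintro ⟨x, y⟩ ⟨hx, hy⟩
      simp only [hA_def, Set.mem_setOf_eq] at hx hy
      simp only [hS_def, Set.mem_compl_iff, Set.mem_setOf_eq, not_lt]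
      rw [hFψ (x, y)]
      have hswap : ∑' g : G, (‖u i g - ψ g y‖₊ : ℝ≥0∞) ^ 2
          = ∑' g : G, (‖ψ g y - u i g‖₊ : ℝ≥0∞) ^ 2 :=
        tsum_congr fun g => by rw [sq_nnnorm_eq, sq_nnnorm_eq, norm_sub_rev]
      calc ∑' g : G, (‖ψ g (x, y).1 - ψ g (x, y).2‖₊ : ℝ≥0∞) ^ 2
          ≤ ∑' g : G, (2 * (‖ψ g x - u i g‖₊ : ℝ≥0∞) ^ 2
              + 2 * (‖u i g - ψ g y‖₊ : ℝ≥0∞) ^ 2) :=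
            ENNReal.tsum_le_tsum fun g => sq_triangle _ _ _
        _ = 2 * (∑' g : G, (‖ψ g x - u i g‖₊ : ℝ≥0∞) ^ 2)
              + 2 * ∑' g : G, (‖u i g - ψ g y‖₊ : ℝ≥0∞) ^ 2 := by
            rw [ENNReal.tsum_add, ENNReal.tsum_mul_left, ENNReal.tsum_mul_left]
        _ ≤ 2 * ENNReal.ofReal (ε/8) + 2 * ENNReal.ofReal (ε/8) := by
            rw [hswap]
            exact add_le_add (mul_le_mul_right hx.le 2) (mul_le_mul_right hy.le 2)
        _ ≤ ENNReal.ofReal ε := by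
            have h2 : (2:ℝ≥0∞) * ENNReal.ofReal (ε/8) = ENNReal.ofReal (2 * (ε/8)) := by
              rw [ENNReal.ofReal_mul (by norm_num : (0:ℝ) ≤ 2), ENNReal.ofReal_ofNat]
            rw [h2, ← ENNReal.ofReal_add (by positivity) (by positivity)]
            exact ENNReal.ofReal_le_ofReal (by linarith)
    have hScompl : (μ.prod μ) Sᶜ = 0 := by
      rw [measure_compl hSmeas (measure_ne_top _ _), h1, measure_univ, tsub_self]
    have hzero : μ (A i) * μ (A i) = 0 := by
      rw [← Measure.prod_prod]
      exact measure_mono_null hsub hScompl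
    rcases mul_eq_zero.mp hzero with h | h <;> exact hi h
  -- F = 0 almost everywhere
  have hF0 : ∀ᵐ p ∂(μ.prod μ), F p = 0 := by
    rw [ae_iff]
    refine measure_mono_null (fun p hp => ?_)
      (measure_iUnion_null (s := fun n : ℕ => {p : X × X | ENNReal.ofReal (1/(n+1)) < F p})
        fun n => hKey _ (by positivity))
    simp only [Set.mem_setOf_eq] at hp
    simp only [Set.mem_iUnion, Set.mem_setOf_eq]
    rcases eq_or_ne (F p) ⊤ with htop | hfin
    · exact ⟨0, by rw [htop]; exact ENNReal.ofReal_lt_top⟩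
    · have hpos : 0 < (F p).toReal := ENNReal.toReal_pos hp hfin
      obtain ⟨n, hn⟩ := exists_nat_gt (1 / (F p).toReal)
      refine ⟨n, ?_⟩
      have h1 : (1 : ℝ)/(n+1) < (F p).toReal := by
        rw [div_lt_iff₀ (by positivity)]
        rw [div_lt_iff₀ hpos] at hn
        nlinarith [hpos]
      calc ENNReal.ofReal (1/(n+1)) < ENNReal.ofReal (F p).toReal :=
            ENNReal.ofReal_lt_ofReal_iff hpos |>.mpr h1
        _ = F p := ENNReal.ofReal_toReal hfin
  -- conclude φ is a.e. "constant on pairs"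
  have hpair : (μ.prod μ) {p : X × X | φ p.1 ≠ φ p.2} = 0 := by
    rw [ae_iff] at hF0
    refine measure_mono_null (fun p hp => ?_) hF0
    simp only [Set.mem_setOf_eq] at hp ⊢
    intro hzero
    apply hp
    have hle : (‖φ ((1 : G) • p.1) - φ ((1 : G) • p.2)‖₊ : ℝ≥0∞) ^ 2 ≤ F p :=
      ENNReal.le_tsum 1
    rw [hzero, le_zero_iff, pow_eq_zero_iff (two_ne_zero), ENNReal.coe_eq_zero,
      nnnorm_eq_zero, sub_eq_zero] at hle
    simpa using hle
  -- conclude φ is constant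
  have hconst : ∀ a b : X, φ a = φ b := by
    by_contra hcon
    push_neg at hcon
    obtain ⟨a, b, hab⟩ := hcon
    set d := ‖φ a - φ b‖ with hd_def
    have hd : 0 < d := by rw [hd_def, norm_pos_iff, sub_ne_zero]; exact hab
    set U := φ ⁻¹' Metric.ball (φ a) (d/3) with hU_def
    set V := φ ⁻¹' Metric.ball (φ b) (d/3) with hV_def
    have hUopen : IsOpen U := Metric.isOpen_ball.preimage φ.continuous
    have hVopen : IsOpen V := Metric.isOpen_ball.preimage φ.continuous
    have hUne : U.Nonempty := ⟨a, by simp [hU_def, Metric.mem_ball, hd]⟩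
    have hVne : V.Nonempty := ⟨b, by simp [hV_def, Metric.mem_ball, hd]⟩
    have hUV : U ×ˢ V ⊆ {p : X × X | φ p.1 ≠ φ p.2} := by
      rintro ⟨x, y⟩ ⟨hx, hy⟩
      simp only [Set.mem_setOf_eq]
      intro heq
      rw [hU_def, Set.mem_preimage, Metric.mem_ball] at hx
      rw [hV_def, Set.mem_preimage, Metric.mem_ball] at hy
      have hxy0 : dist (φ x) (φ y) = 0 := by rw [heq, dist_self]
      have h4 := dist_triangle4 (φ a) (φ x) (φ y) (φ b)
      rw [hxy0] at h4
      have hD : dist (φ a) (φ b) = d := by rw [dist_eq_norm]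
      rw [hD, dist_comm (φ a) (φ x)] at h4
      simp only at hx hy
      linarith [hx, hy, h4]
    have hpos : 0 < (μ.prod μ) (U ×ˢ V) := by
      rw [Measure.prod_prod]
      exact ENNReal.mul_pos (hsupp U hUopen hUne).ne' (hsupp V hVopen hVne).ne'
    exact absurd (measure_mono_null hUV hpair) hpos.ne'
  exact ⟨φ (Classical.arbitrary X), fun x => hconst x _⟩
end
end

section
/- Let (Y,d) be a metric space equipped with a Borel probability measure μ, and let C, Q > 0 be constants such that μ(closedBall(x,r)) ≤ C·r^Q for every x ∈ Y and every r > 0. Let α > 0 satisfy 2α < Q. Then there exists a constant C' > 0, depending only on C, Q and α, with the following property: for every z ∈ Y, every M ≥ 0, and every Borel measurable h: Y × Y → [0,∞) satisfying h(ξ,ξ')·d(z,ξ)·d(z,ξ') ≤ M for all ξ, ξ' ∈ Y, one has ∬_{Y×Y} h(ξ,ξ')^{2α} d(μ×μ)(ξ,ξ') ≤ C'·M^{2α}. -/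
open MeasureTheory Set
open scoped ENNReal

theorem aux_single_bound
    {Y : Type*} [MetricSpace Y] [MeasurableSpace Y] [BorelSpace Y]
    (μ : Measure Y) [IsProbabilityMeasure μ]
    (C Q : ℝ) (hC : 0 < C) (hQ : 0 < Q)
    (hreg : ∀ (x : Y) (r : ℝ), 0 < r →
      μ (Metric.closedBall x r) ≤ ENNReal.ofReal (C * r ^ Q))
    (s : ℝ) (hs : 0 < s) (hsQ : s < Q) (z : Y) :
    ∫⁻ ξ, ENNReal.ofReal (dist z ξ ^ (-s)) ∂μ
      ≤ ENNReal.ofReal (1 + C / (Q / s - 1)) := by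
  set p : ℝ := Q / s with hp_def
  have hp1 : 1 < p := (one_lt_div hs).2 hsQ
  have f_mble : Measurable fun ξ => dist z ξ ^ (-s) :=
    (continuous_const.dist continuous_id).measurable.pow_const _
  rw [lintegral_eq_lintegral_meas_lt μ
    (Filter.Eventually.of_forall fun ξ => Real.rpow_nonneg dist_nonneg _) f_mble.aemeasurable]
  -- bound the measure of superlevel sets
  have hset : ∀ t : ℝ, 0 < t →
      μ {a : Y | t < dist z a ^ (-s)} ≤ ENNReal.ofReal (C * t ^ (-p)) := by
    intro t ht
    have hsub : {a : Y | t < dist z a ^ (-s)} ⊆ Metric.closedBall z (t ^ (-(1/s))) := by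
      intro a ha
      simp only [mem_setOf_eq] at ha
      have hd : 0 < dist z a := by
        rcases eq_or_lt_of_le (dist_nonneg : (0:ℝ) ≤ dist z a) with h | h
        · rw [← h, Real.zero_rpow (by linarith : -s ≠ 0)] at ha; linarith
        · exact h
      have h1 : dist z a ^ s < t⁻¹ := by
        have : dist z a ^ (-s) = (dist z a ^ s)⁻¹ := Real.rpow_neg dist_nonneg s
        rw [this] at ha
        have hds : 0 < dist z a ^ s := Real.rpow_pos_of_pos hd s
        exact (lt_inv_comm₀ ht hds).mp ha
      have h2 : (dist z a ^ s) ^ (1/s) < (t⁻¹) ^ (1/s) :=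
        Real.rpow_lt_rpow (Real.rpow_nonneg dist_nonneg s) h1 (by positivity)
      have hda : (dist z a ^ s) ^ (1/s) = dist z a := by
        rw [← Real.rpow_mul dist_nonneg, mul_one_div_cancel hs.ne', Real.rpow_one]
      have hti : (t⁻¹:ℝ) ^ (1/s) = t ^ (-(1/s)) := by
        rw [Real.inv_rpow ht.le, ← Real.rpow_neg ht.le]
      rw [hda, hti] at h2
      rw [Metric.mem_closedBall, dist_comm]
      exact h2.le
    calc μ {a : Y | t < dist z a ^ (-s)} ≤ μ (Metric.closedBall z (t ^ (-(1/s)))) :=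
          measure_mono hsub
      _ ≤ ENNReal.ofReal (C * (t ^ (-(1/s))) ^ Q) :=
          hreg z _ (Real.rpow_pos_of_pos ht _)
      _ = ENNReal.ofReal (C * t ^ (-p)) := by
          rw [← Real.rpow_mul ht.le]
          congr 2
          rw [hp_def]
          field_simp
  calc ∫⁻ t in Ioi (0:ℝ), μ {a | t < dist z a ^ (-s)}
      = (∫⁻ t in Ioc (0:ℝ) 1, μ {a | t < dist z a ^ (-s)})
        + ∫⁻ t in Ioi (1:ℝ), μ {a | t < dist z a ^ (-s)} := by
        rw [← lintegral_union measurableSet_Ioi (Ioc_disjoint_Ioi le_rfl),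
          Ioc_union_Ioi_eq_Ioi zero_le_one]
    _ ≤ ENNReal.ofReal 1 + ENNReal.ofReal (C / (p - 1)) := by
        gcongr
        · calc ∫⁻ t in Ioc (0:ℝ) 1, μ {a : Y | t < dist z a ^ (-s)}
              ≤ ∫⁻ _ in Ioc (0:ℝ) 1, 1 :=
              setLIntegral_mono measurable_const (fun t _ => prob_le_one)
            _ = ENNReal.ofReal 1 := by simp [Real.volume_Ioc]
        · calc ∫⁻ t in Ioi (1:ℝ), μ {a : Y | t < dist z a ^ (-s)}
              ≤ ∫⁻ t in Ioi (1:ℝ), ENNReal.ofReal (C * t ^ (-p)) :=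
              setLIntegral_mono
                (ENNReal.measurable_ofReal.comp
                  (measurable_const.mul (measurable_id.pow_const _)))
                (fun t ht => hset t (lt_trans one_pos ht))
            _ = ENNReal.ofReal (∫ t in Ioi (1:ℝ), C * t ^ (-p)) :=
              (ofReal_integral_eq_lintegral_ofReal
                ((integrableOn_Ioi_rpow_of_lt (by linarith : -p < -1) one_pos).const_mul C)
                ((ae_restrict_iff' measurableSet_Ioi).2 (Filter.Eventually.of_forall
                  (fun t ht => by
                    have : (0:ℝ) < t := lt_trans one_pos ht
                    positivity)))).symm
            _ = ENNReal.ofReal (C / (p - 1)) := by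
              rw [integral_const_mul,
                integral_Ioi_rpow_of_lt (by linarith : -p < -1) one_pos,
                Real.one_rpow]
              congr 1
              have h1 : -p + 1 ≠ 0 := by linarith
              have h2 : p - 1 ≠ 0 := by linarith
              field_simp
              ring
    _ = ENNReal.ofReal (1 + C / (p - 1)) :=
      (ENNReal.ofReal_add zero_le_one (le_of_lt (div_pos hC (by linarith)))).symm

/-- On a metric measure space satisfying the upper Ahlfors-regularity bound
`μ(B̄(x,r)) ≤ C·r^Q`, and for `0 < α` with `2α < Q`, there is a constant `C' > 0`
(depending only on `C`, `Q`, `α`) such that for every `z`, `M ≥ 0` and nonnegative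
Borel `h : Y × Y → [0,∞)` with `h(ξ,ξ')·d(z,ξ)·d(z,ξ') ≤ M` for all `ξ, ξ'`, one has
`∬ h(ξ,ξ')^(2α) d(μ×μ) ≤ C'·M^(2α)`. -/
theorem double_integral_bound_of_ahlfors_upper
    {Y : Type*} [MetricSpace Y] [MeasurableSpace Y] [BorelSpace Y]
    (μ : Measure Y) [IsProbabilityMeasure μ]
    (C Q : ℝ) (hC : 0 < C) (hQ : 0 < Q)
    (hreg : ∀ (x : Y) (r : ℝ), 0 < r →
      μ (Metric.closedBall x r) ≤ ENNReal.ofReal (C * r ^ Q))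
    (α : ℝ) (hα : 0 < α) (hαQ : 2 * α < Q) :
    ∃ C' : ℝ, 0 < C' ∧ ∀ (z : Y) (M : ℝ), 0 ≤ M →
      ∀ h : Y × Y → ℝ, Measurable h → (∀ p : Y × Y, 0 ≤ h p) →
      (∀ ξ ξ' : Y, h (ξ, ξ') * dist z ξ * dist z ξ' ≤ M) →
      ∫⁻ p : Y × Y, ENNReal.ofReal (h p ^ (2 * α)) ∂(μ.prod μ)
        ≤ ENNReal.ofReal (C' * M ^ (2 * α)) := by
  set s : ℝ := 2 * α with hs_def
  have hs : 0 < s := by positivity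
  have hsQ : s < Q := hαQ
  have hp1 : 1 < Q / s := (one_lt_div hs).2 hsQ
  set K : ℝ := 1 + C / (Q / s - 1) with hK_def
  have hK0 : 0 < K := by
    have hd := div_pos hC (by linarith : (0:ℝ) < Q / s - 1)
    rw [hK_def]; linarith
  refine ⟨K * K, mul_pos hK0 hK0, ?_⟩
  intro z M hM h hmeas hnn hbound
  -- the singleton {z} is null
  have hz : μ {z} = 0 := by
    have hle : ∀ r : ℝ, 0 < r → μ {z} ≤ ENNReal.ofReal (C * r ^ Q) := fun r hr =>
      (measure_mono (Set.singleton_subset_iff.2 (Metric.mem_closedBall_self hr.le))).trans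
        (hreg z r hr)
    have h0 : Filter.Tendsto (fun r : ℝ => C * r ^ Q) (nhds 0) (nhds 0) := by
      have hc : Filter.Tendsto (fun r : ℝ => r ^ Q) (nhds 0) (nhds ((0:ℝ) ^ Q)) :=
        (Real.continuousAt_rpow_const 0 Q (Or.inr hQ.le)).tendsto
      rw [Real.zero_rpow hQ.ne'] at hc
      simpa using hc.const_mul C
    have ht : Filter.Tendsto (fun r : ℝ => ENNReal.ofReal (C * r ^ Q))
        (nhdsWithin 0 (Set.Ioi 0)) (nhds 0) := by
      have h1 : Filter.Tendsto (fun r : ℝ => ENNReal.ofReal (C * r ^ Q))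
          (nhds 0) (nhds (ENNReal.ofReal 0)) :=
        (ENNReal.continuous_ofReal.tendsto 0).comp h0
      simpa using h1.mono_left nhdsWithin_le_nhds
    exact le_zero_iff.mp
      (ge_of_tendsto ht (Filter.eventually_of_mem self_mem_nhdsWithin fun r hr => hle r hr))
  -- the set where one coordinate equals z is null in the product
  have hN : (μ.prod μ) {q : Y × Y | q.1 = z ∨ q.2 = z} = 0 := by
    have hsub : {q : Y × Y | q.1 = z ∨ q.2 = z}
        ⊆ ({z} ×ˢ Set.univ) ∪ (Set.univ ×ˢ ({z} : Set Y)) := by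
      rintro ⟨a, b⟩ (rfl | rfl) <;> simp
    refine measure_mono_null hsub (le_antisymm ((measure_union_le _ _).trans ?_) zero_le)
    rw [Measure.prod_prod, Measure.prod_prod, hz]
    simp
  set g : Y → ℝ≥0∞ := fun ξ => ENNReal.ofReal (dist z ξ ^ (-s)) with hg_def
  have hgm : Measurable g :=
    ENNReal.measurable_ofReal.comp ((continuous_const.dist continuous_id).measurable.pow_const _)
  have hae : ∀ᵐ q ∂(μ.prod μ),
      ENNReal.ofReal (h q ^ s) ≤ ENNReal.ofReal (M ^ s) * (g q.1 * g q.2) := by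
    filter_upwards [measure_eq_zero_iff_ae_notMem.mp hN] with q hq
    simp only [Set.mem_setOf_eq, not_or] at hq
    obtain ⟨h1, h2⟩ := hq
    have d1 : 0 < dist z q.1 := dist_pos.2 (fun e => h1 e.symm)
    have d2 : 0 < dist z q.2 := dist_pos.2 (fun e => h2 e.symm)
    have hhq : h q ≤ M / (dist z q.1 * dist z q.2) := by
      rw [le_div_iff₀ (by positivity)]
      have hb := hbound q.1 q.2
      calc h q * (dist z q.1 * dist z q.2)
          = h (q.1, q.2) * dist z q.1 * dist z q.2 := by ring
        _ ≤ M := hb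
    have hpow : h q ^ s ≤ M ^ s * (dist z q.1 ^ (-s) * dist z q.2 ^ (-s)) := by
      calc h q ^ s ≤ (M / (dist z q.1 * dist z q.2)) ^ s :=
            Real.rpow_le_rpow (hnn q) hhq hs.le
        _ = M ^ s * (dist z q.1 ^ (-s) * dist z q.2 ^ (-s)) := by
            rw [div_eq_mul_inv, Real.mul_rpow hM (by positivity), mul_inv,
              Real.mul_rpow (by positivity) (by positivity),
              Real.inv_rpow d1.le, Real.inv_rpow d2.le,
              ← Real.rpow_neg d1.le, ← Real.rpow_neg d2.le]
    calc ENNReal.ofReal (h q ^ s)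
        ≤ ENNReal.ofReal (M ^ s * (dist z q.1 ^ (-s) * dist z q.2 ^ (-s))) :=
          ENNReal.ofReal_le_ofReal hpow
      _ = ENNReal.ofReal (M ^ s) * (g q.1 * g q.2) := by
          rw [ENNReal.ofReal_mul (Real.rpow_nonneg hM s),
            ENNReal.ofReal_mul (Real.rpow_nonneg dist_nonneg (-s))]
  calc (∫⁻ q : Y × Y, ENNReal.ofReal (h q ^ s) ∂(μ.prod μ))
      ≤ ∫⁻ q : Y × Y, ENNReal.ofReal (M ^ s) * (g q.1 * g q.2) ∂(μ.prod μ) :=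
        lintegral_mono_ae hae
    _ = ENNReal.ofReal (M ^ s) * ((∫⁻ ξ, g ξ ∂μ) * (∫⁻ ξ, g ξ ∂μ)) := by
        rw [lintegral_const_mul (f := fun q : Y × Y => g q.1 * g q.2) _
            ((Measurable.mul (hgm.comp measurable_fst) (hgm.comp measurable_snd) :
              Measurable fun q : Y × Y => g q.1 * g q.2)),
          lintegral_prod_mul hgm.aemeasurable hgm.aemeasurable]
    _ ≤ ENNReal.ofReal (M ^ s) * (ENNReal.ofReal K * ENNReal.ofReal K) := by
        gcongr <;> exact aux_single_bound μ C Q hC hQ hreg s hs hsQ z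
    _ = ENNReal.ofReal (K * K * M ^ s) := by
        rw [← ENNReal.ofReal_mul hK0.le,
          ← ENNReal.ofReal_mul (Real.rpow_nonneg hM s)]
        congr 1
        ring
end

section
/- Let (Y,d) be a compact metric space with a Borel probability measure μ, and let C, Q > 0 be constants with μ(closedBall(x,r)) ≤ C·r^Q for every x ∈ Y and r > 0. Let α > 0 satisfy 2α < Q. Then there exists a constant C' > 0, depending only on C, Q and α, with the following property: for every Borel measurable f: Y → Y, every z ∈ Y and M ≥ 0 with d(f ξ, f ξ')·d(z,ξ)·d(z,ξ') ≤ M for all ξ, ξ' ∈ Y, and every function φ: Y → ℂ satisfying the Hölder bound |φ(y) − φ(y')| ≤ H·d(y,y')^α for all y, y' ∈ Y (with H ≥ 0), one has ∫_Y |φ∘f|² dμ − |∫_Y φ∘f dμ|² ≤ C'·H²·M^{2α}. -/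
open MeasureTheory
open scoped ENNReal NNReal


lemma var_le_moment2 {Y : Type*} [MeasurableSpace Y] (μ : Measure Y) [IsProbabilityMeasure μ]
    (g : Y → ℂ) (hg : Integrable g μ) (hg2 : Integrable (fun ξ => ‖g ξ‖ ^ 2) μ) (c : ℂ) :
    (∫ ξ, ‖g ξ‖ ^ 2 ∂μ) - ‖∫ ξ, g ξ ∂μ‖ ^ 2 ≤ ∫ ξ, ‖g ξ - c‖ ^ 2 ∂μ := by
  set I := ∫ ξ, g ξ ∂μ with hI
  have key : ∀ a : ℂ, ‖a - c‖ ^ 2 = ‖a‖ ^ 2 - 2 * (a * (starRingEnd ℂ) c).re + ‖c‖ ^ 2 := by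
    intro a
    have h := Complex.normSq_sub a c
    simp only [Complex.normSq_eq_norm_sq] at h
    linarith
  have hcross : Integrable (fun ξ => (g ξ * (starRingEnd ℂ) c).re) μ :=
    (RCLike.reCLM (K := ℂ)).integrable_comp (hg.mul_const _)
  have hre : ∫ ξ, (g ξ * (starRingEnd ℂ) c).re ∂μ = (I * (starRingEnd ℂ) c).re := by
    have := integral_re (𝕜 := ℂ) (hg.mul_const ((starRingEnd ℂ) c))
    rw [integral_mul_const] at this
    exact this
  have expand : ∫ ξ, ‖g ξ - c‖ ^ 2 ∂μ
      = (∫ ξ, ‖g ξ‖ ^ 2 ∂μ) - 2 * (I * (starRingEnd ℂ) c).re + ‖c‖ ^ 2 := by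
    have : (fun ξ => ‖g ξ - c‖ ^ 2)
        = fun ξ => ‖g ξ‖ ^ 2 - 2 * (g ξ * (starRingEnd ℂ) c).re + ‖c‖ ^ 2 := by
      funext ξ; exact key (g ξ)
    have h1 : Integrable (fun ξ => ‖g ξ‖ ^ 2 - 2 * (g ξ * (starRingEnd ℂ) c).re) μ :=
      hg2.sub (hcross.const_mul 2)
    rw [this, integral_add h1 (integrable_const _),
      integral_sub hg2 (hcross.const_mul 2), MeasureTheory.integral_const_mul, hre, integral_const]
    simp
  rw [expand]
  have := key I
  nlinarith [sq_nonneg ‖I - c‖, norm_nonneg (I - c)]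


lemma lintegral_dist_rpow_le {Y : Type*} [MetricSpace Y] [MeasurableSpace Y] [BorelSpace Y]
    (μ : Measure Y) [IsProbabilityMeasure μ] (C Q α : ℝ) (hC : 0 < C) (hQ : 0 < Q)
    (hα : 0 < α) (hαQ : 2 * α < Q) (z : Y)
    (hreg : ∀ r : ℝ, 0 < r → μ (Metric.closedBall z r) ≤ ENNReal.ofReal (C * r ^ Q)) :
    ∫⁻ ξ, ENNReal.ofReal (dist z ξ ^ (-(2 * α))) ∂μ
      ≤ ENNReal.ofReal (1 + C * (2:ℝ) ^ (2 * α) * (1 - ((2:ℝ)⁻¹) ^ (Q - 2 * α))⁻¹) := by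
  have hb : (0:ℝ) < 2⁻¹ := by norm_num
  set ρ : ℝ := ((2:ℝ)⁻¹) ^ (Q - 2 * α) with hρ
  have hρ0 : 0 < ρ := Real.rpow_pos_of_pos hb _
  have hρ1 : ρ < 1 := Real.rpow_lt_one hb.le (by norm_num) (by linarith)
  set F : ℕ → Y → ℝ≥0∞ := fun n ξ =>
    ENNReal.ofReal ((((2:ℝ)⁻¹) ^ (n + 1) : ℝ) ^ (-(2 * α))) *
      (Metric.closedBall z (((2:ℝ)⁻¹) ^ n)).indicator 1 ξ with hF
  have hFmeas : ∀ n, Measurable (F n) := fun n =>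
    (measurable_const.indicator measurableSet_closedBall).const_mul _
  -- pointwise bound
  have hpt : ∀ ξ, ENNReal.ofReal (dist z ξ ^ (-(2 * α))) ≤ 1 + ∑' n, F n ξ := by
    intro ξ
    rcases eq_or_lt_of_le (dist_nonneg (x := z) (y := ξ)) with hd0 | hd0
    · rw [← hd0, Real.zero_rpow (neg_ne_zero.mpr (by positivity))]
      simp
    rcases le_or_gt (dist z ξ) 1 with hd1 | hd1
    · -- find minimal n with 2⁻¹^(n+1) < d
      have hex : ∃ n : ℕ, ((2:ℝ)⁻¹) ^ (n + 1) < dist z ξ := by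
        obtain ⟨m, hm⟩ := exists_pow_lt_of_lt_one hd0 (by norm_num : (2:ℝ)⁻¹ < 1)
        exact ⟨m, lt_of_le_of_lt (pow_le_pow_of_le_one hb.le (by norm_num) (by omega)) hm⟩
      obtain ⟨n, hlow, hub⟩ : ∃ n : ℕ, ((2:ℝ)⁻¹) ^ (n + 1) < dist z ξ ∧
          dist z ξ ≤ ((2:ℝ)⁻¹) ^ n := by
        refine ⟨Nat.find hex, Nat.find_spec hex, ?_⟩
        rcases Nat.eq_zero_or_pos (Nat.find hex) with h0 | h0
        · rw [h0]; simpa using hd1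
        · have h1 := Nat.find_min hex (Nat.sub_lt h0 one_pos)
          have h2 : Nat.find hex - 1 + 1 = Nat.find hex := by omega
          rw [h2] at h1
          exact not_lt.mp h1
      have hmem : ξ ∈ Metric.closedBall z (((2:ℝ)⁻¹) ^ n) := by
        rw [Metric.mem_closedBall, dist_comm]; exact hub
      have h1 : ENNReal.ofReal (dist z ξ ^ (-(2 * α))) ≤ F n ξ := by
        rw [hF]; simp only [Set.indicator_of_mem hmem, Pi.one_apply, mul_one]
        exact ENNReal.ofReal_le_ofReal
          (Real.rpow_le_rpow_of_nonpos (by positivity) hlow.le (by linarith))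
      calc ENNReal.ofReal (dist z ξ ^ (-(2 * α))) ≤ F n ξ := h1
        _ ≤ ∑' m, F m ξ := ENNReal.le_tsum n
        _ ≤ 1 + ∑' m, F m ξ := le_add_self
    · have : dist z ξ ^ (-(2 * α)) ≤ 1 :=
        Real.rpow_le_one_of_one_le_of_nonpos hd1.le (by linarith)
      calc ENNReal.ofReal (dist z ξ ^ (-(2 * α))) ≤ 1 := by
            simpa using ENNReal.ofReal_le_ofReal this
        _ ≤ 1 + ∑' m, F m ξ := self_le_add_right _ _
  -- integrate
  have hint : ∫⁻ ξ, ENNReal.ofReal (dist z ξ ^ (-(2 * α))) ∂μ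
      ≤ 1 + ∑' n, ∫⁻ ξ, F n ξ ∂μ := by
    calc ∫⁻ ξ, ENNReal.ofReal (dist z ξ ^ (-(2 * α))) ∂μ
        ≤ ∫⁻ ξ, (1 + ∑' n, F n ξ) ∂μ := lintegral_mono hpt
      _ = ∫⁻ _, (1:ℝ≥0∞) ∂μ + ∫⁻ ξ, ∑' n, F n ξ ∂μ :=
          lintegral_add_left measurable_const _
      _ = 1 + ∑' n, ∫⁻ ξ, F n ξ ∂μ := by
          rw [lintegral_const, measure_univ, mul_one,
            lintegral_tsum (fun n => (hFmeas n).aemeasurable)]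
  -- bound each term
  have hterm : ∀ n, ∫⁻ ξ, F n ξ ∂μ ≤ ENNReal.ofReal (C * (2:ℝ) ^ (2 * α) * ρ ^ n) := by
    intro n
    have : ∫⁻ ξ, F n ξ ∂μ = ENNReal.ofReal ((((2:ℝ)⁻¹) ^ (n + 1) : ℝ) ^ (-(2 * α))) *
        μ (Metric.closedBall z (((2:ℝ)⁻¹) ^ n)) := by
      simp only [hF]
      rw [lintegral_const_mul _
          (measurable_one.indicator measurableSet_closedBall :
            Measurable ((Metric.closedBall z (((2:ℝ)⁻¹) ^ n)).indicator (1 : Y → ℝ≥0∞))),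
        lintegral_indicator_one measurableSet_closedBall]
    rw [this]
    have hball := hreg _ (pow_pos hb n)
    calc _ ≤ ENNReal.ofReal ((((2:ℝ)⁻¹) ^ (n + 1) : ℝ) ^ (-(2 * α))) *
          ENNReal.ofReal (C * (((2:ℝ)⁻¹) ^ n : ℝ) ^ Q) := by
          exact mul_le_mul_right hball _
      _ = ENNReal.ofReal ((((2:ℝ)⁻¹) ^ (n + 1) : ℝ) ^ (-(2 * α)) *
          (C * (((2:ℝ)⁻¹) ^ n : ℝ) ^ Q)) := by
          rw [← ENNReal.ofReal_mul (by positivity)]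
      _ = ENNReal.ofReal (C * (2:ℝ) ^ (2 * α) * ρ ^ n) := by
          congr 1
          rw [← Real.rpow_natCast ((2:ℝ)⁻¹) (n + 1), ← Real.rpow_natCast ((2:ℝ)⁻¹) n,
            ← Real.rpow_mul hb.le, ← Real.rpow_mul hb.le, hρ,
            ← Real.rpow_natCast (((2:ℝ)⁻¹) ^ (Q - 2 * α)) n, ← Real.rpow_mul hb.le]
          have h2 : (2:ℝ) ^ (2 * α) = ((2:ℝ)⁻¹) ^ (-(2 * α)) := by
            rw [Real.inv_rpow (by norm_num), Real.rpow_neg (by norm_num), inv_inv]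
          calc ((2:ℝ)⁻¹) ^ ((↑(n + 1) : ℝ) * -(2 * α)) * (C * ((2:ℝ)⁻¹) ^ ((n : ℝ) * Q))
              = C * (((2:ℝ)⁻¹) ^ ((↑(n + 1) : ℝ) * -(2 * α)) * ((2:ℝ)⁻¹) ^ ((n : ℝ) * Q)) := by
                ring
            _ = C * ((2:ℝ)⁻¹) ^ ((↑(n + 1) : ℝ) * -(2 * α) + (n : ℝ) * Q) := by
                rw [← Real.rpow_add hb]
            _ = C * ((2:ℝ)⁻¹) ^ (-(2 * α) + (Q - 2 * α) * (n : ℝ)) := by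
                congr 1; push_cast; ring
            _ = C * (((2:ℝ)⁻¹) ^ (-(2 * α)) * ((2:ℝ)⁻¹) ^ ((Q - 2 * α) * (n : ℝ))) := by
                rw [Real.rpow_add hb]
            _ = C * (2:ℝ) ^ (2 * α) * ((2:ℝ)⁻¹) ^ ((Q - 2 * α) * (n : ℝ)) := by
                rw [h2]; ring
  -- sum the geometric series
  have hsum : ∑' n, ∫⁻ ξ, F n ξ ∂μ ≤ ENNReal.ofReal (C * (2:ℝ) ^ (2 * α) * (1 - ρ)⁻¹) := by
    calc ∑' n, ∫⁻ ξ, F n ξ ∂μ ≤ ∑' n, ENNReal.ofReal (C * (2:ℝ) ^ (2 * α) * ρ ^ n) :=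
          ENNReal.tsum_le_tsum hterm
      _ = ∑' n, ENNReal.ofReal (C * (2:ℝ) ^ (2 * α)) * (ENNReal.ofReal ρ) ^ n := by
          congr 1; funext n
          rw [← ENNReal.ofReal_pow hρ0.le, ← ENNReal.ofReal_mul (by positivity)]
      _ = ENNReal.ofReal (C * (2:ℝ) ^ (2 * α)) * (1 - ENNReal.ofReal ρ)⁻¹ := by
          rw [ENNReal.tsum_mul_left, ENNReal.tsum_geometric]
      _ = ENNReal.ofReal (C * (2:ℝ) ^ (2 * α) * (1 - ρ)⁻¹) := by
          have h1ρ : (0:ℝ) < 1 - ρ := by linarith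
          have hCB : (0:ℝ) ≤ C * (2:ℝ) ^ (2 * α) := by positivity
          rw [ENNReal.ofReal_mul hCB, ENNReal.ofReal_inv_of_pos h1ρ,
            ENNReal.ofReal_sub _ hρ0.le, ENNReal.ofReal_one]
  calc ∫⁻ ξ, ENNReal.ofReal (dist z ξ ^ (-(2 * α))) ∂μ
      ≤ 1 + ∑' n, ∫⁻ ξ, F n ξ ∂μ := hint
    _ ≤ 1 + ENNReal.ofReal (C * (2:ℝ) ^ (2 * α) * (1 - ρ)⁻¹) := add_le_add_right hsum _
    _ = ENNReal.ofReal (1 + C * (2:ℝ) ^ (2 * α) * (1 - ρ)⁻¹) := by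
        have h1ρ : (0:ℝ) < 1 - ρ := by linarith
        rw [ENNReal.ofReal_add (by norm_num) (by positivity), ENNReal.ofReal_one]



/-- Variance bound for Hölder functions composed with a contracting map.
On a compact metric space with the upper Ahlfors-regularity bound `μ(B̄(x,r)) ≤ C·r^Q`
and for `0 < α` with `2α < Q`, there is `C' > 0` (depending only on `C`, `Q`, `α`)
such that: for every Borel `f : Y → Y`, `z ∈ Y`, `M ≥ 0` with
`d(f ξ, f ξ')·d(z,ξ)·d(z,ξ') ≤ M` for all `ξ, ξ'`, and every `α`-Hölder `φ : Y → ℂ`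
with Hölder constant `H ≥ 0`, one has
`∫ |φ∘f|² dμ − |∫ φ∘f dμ|² ≤ C'·H²·M^(2α)`. -/
theorem variance_bound_of_ahlfors_upper
    {Y : Type*} [MetricSpace Y] [CompactSpace Y] [MeasurableSpace Y] [BorelSpace Y]
    (μ : Measure Y) [IsProbabilityMeasure μ]
    (C Q : ℝ) (hC : 0 < C) (hQ : 0 < Q)
    (hreg : ∀ (x : Y) (r : ℝ), 0 < r →
      μ (Metric.closedBall x r) ≤ ENNReal.ofReal (C * r ^ Q))
    (α : ℝ) (hα : 0 < α) (hαQ : 2 * α < Q) :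
    ∃ C' : ℝ, 0 < C' ∧ ∀ f : Y → Y, Measurable f → ∀ (z : Y) (M : ℝ), 0 ≤ M →
      (∀ ξ ξ' : Y, dist (f ξ) (f ξ') * dist z ξ * dist z ξ' ≤ M) →
      ∀ (φ : Y → ℂ) (H : ℝ), 0 ≤ H →
      (∀ y y' : Y, ‖φ y - φ y'‖ ≤ H * dist y y' ^ α) →
      (∫ ξ, ‖φ (f ξ)‖ ^ 2 ∂μ) - ‖∫ ξ, φ (f ξ) ∂μ‖ ^ 2 ≤ C' * H ^ 2 * M ^ (2 * α) := by
  set ρ : ℝ := ((2:ℝ)⁻¹) ^ (Q - 2 * α) with hρdef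
  have hρ0 : 0 < ρ := Real.rpow_pos_of_pos (by norm_num) _
  have hρ1 : ρ < 1 := Real.rpow_lt_one (by norm_num) (by norm_num) (by linarith)
  have h1ρ : (0:ℝ) < 1 - ρ := by linarith
  set KR : ℝ := 1 + C * (2:ℝ) ^ (2 * α) * (1 - ρ)⁻¹ with hKRdef
  have hKR : 0 < KR := by
    have h1 : 0 < C * (2:ℝ) ^ (2 * α) * (1 - ρ)⁻¹ :=
      mul_pos (mul_pos hC (Real.rpow_pos_of_pos (by norm_num) _)) (inv_pos.mpr h1ρ)
    rw [hKRdef]; linarith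
  set r₀ : ℝ := ((2 * C)⁻¹) ^ (1 / Q) with hr₀def
  have hr₀ : 0 < r₀ := Real.rpow_pos_of_pos (by positivity) _
  refine ⟨(r₀⁻¹) ^ (2 * α) * KR,
    mul_pos (Real.rpow_pos_of_pos (inv_pos.mpr hr₀) _) hKR, ?_⟩
  intro f hf z M hM0 hM φ H hH0 hHol
  -- Y is nonempty
  have hYne : Nonempty Y := by
    by_contra h
    rw [not_nonempty_iff] at h
    have h1 : μ Set.univ = 1 := measure_univ
    rw [Set.univ_eq_empty_iff.mpr h, measure_empty] at h1
    exact zero_ne_one h1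
  -- φ is continuous
  have hφc : Continuous φ := by
    rw [Metric.continuous_iff]
    intro b ε hε
    refine ⟨(ε / (H + 1)) ^ (1 / α), Real.rpow_pos_of_pos (by positivity) _, fun a hab => ?_⟩
    have h1 : dist a b ^ α < ((ε / (H + 1)) ^ (1 / α)) ^ α :=
      Real.rpow_lt_rpow dist_nonneg hab hα
    have h2 : ((ε / (H + 1)) ^ (1 / α) : ℝ) ^ α = ε / (H + 1) := by
      rw [← Real.rpow_mul (by positivity), one_div, inv_mul_cancel₀ hα.ne', Real.rpow_one]
    have h3 : H * dist a b ^ α ≤ H * (ε / (H + 1)) := by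
      rw [← h2]
      exact mul_le_mul_of_nonneg_left h1.le hH0
    have h4 : H * (ε / (H + 1)) < ε := by
      rw [mul_div_assoc'] ; rw [div_lt_iff₀ (by positivity)]
      nlinarith
    calc dist (φ a) (φ b) = ‖φ a - φ b‖ := by rw [dist_eq_norm]
      _ ≤ H * dist a b ^ α := hHol a b
      _ < ε := lt_of_le_of_lt h3 h4
  -- bound on φ
  obtain ⟨y₀, hy₀, hmax⟩ := isCompact_univ.exists_isMaxOn Set.univ_nonempty
    (continuous_norm.comp hφc).continuousOn
  set b : ℝ := ‖φ y₀‖ with hbdef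
  have hb : ∀ y : Y, ‖φ y‖ ≤ b := fun y => hmax (Set.mem_univ y)
  have hb0 : 0 ≤ b := (norm_nonneg _).trans (hb y₀)
  -- measurability and integrability
  have hgm : Measurable (fun ξ => φ (f ξ)) := hφc.measurable.comp hf
  have hg : Integrable (fun ξ => φ (f ξ)) μ :=
    Integrable.mono' (integrable_const b) hgm.aestronglyMeasurable
      (Filter.Eventually.of_forall fun ξ => hb _)
  have hg2 : Integrable (fun ξ => ‖φ (f ξ)‖ ^ 2) μ := by
    refine Integrable.mono' (integrable_const (b ^ 2))
      ((hgm.norm.pow_const 2).aestronglyMeasurable)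
      (Filter.Eventually.of_forall fun ξ => ?_)
    rw [Real.norm_of_nonneg (by positivity)]
    exact pow_le_pow_left₀ (norm_nonneg _) (hb _) 2
  -- find a point far from z
  have hr₀Q : C * r₀ ^ Q = 2⁻¹ := by
    rw [hr₀def, ← Real.rpow_mul (by positivity), one_div, inv_mul_cancel₀ hQ.ne',
      Real.rpow_one]
    field_simp
  obtain ⟨ξ₀, hξ₀⟩ : ∃ ξ₀ : Y, r₀ < dist z ξ₀ := by
    by_contra h
    push_neg at h
    have huniv : Metric.closedBall z r₀ = Set.univ := by
      ext ξ; simp only [Metric.mem_closedBall, Set.mem_univ, iff_true]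
      rw [dist_comm]; exact h ξ
    have h1 : (1 : ℝ≥0∞) ≤ ENNReal.ofReal (C * r₀ ^ Q) := by
      rw [← measure_univ (μ := μ), ← huniv]
      exact hreg z r₀ hr₀
    rw [hr₀Q] at h1
    have h2 : ENNReal.ofReal (2⁻¹ : ℝ) < 1 := by
      rw [show (1:ℝ≥0∞) = ENNReal.ofReal 1 from (ENNReal.ofReal_one).symm]
      exact ENNReal.ofReal_lt_ofReal_iff_of_nonneg (by norm_num) |>.mpr (by norm_num)
    exact absurd h1 (not_le.mpr h2)
  have hd₀ : 0 < dist z ξ₀ := hr₀.trans hξ₀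
  set c : ℂ := φ (f ξ₀) with hcdef
  -- μ {z} = 0
  have hz0 : μ {z} = 0 := by
    by_contra hzne
    have hmpos : 0 < (μ {z}).toReal :=
      ENNReal.toReal_pos hzne (measure_ne_top μ _)
    set m : ℝ := (μ {z}).toReal with hmdef
    set r : ℝ := (m / (2 * C)) ^ (1 / Q) with hrdef
    have hr : 0 < r := Real.rpow_pos_of_pos (by positivity) _
    have hrQ : C * r ^ Q = m / 2 := by
      rw [hrdef, ← Real.rpow_mul (by positivity), one_div, inv_mul_cancel₀ hQ.ne',
        Real.rpow_one]
      field_simp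
    have h1 : μ {z} ≤ ENNReal.ofReal (m / 2) := by
      rw [← hrQ]
      exact le_trans (measure_mono (by simp [hr.le])) (hreg z r hr)
    have h2 : m ≤ m / 2 := by
      have := ENNReal.toReal_mono ENNReal.ofReal_ne_top h1
      rwa [ENNReal.toReal_ofReal (by positivity)] at this
    linarith
  have hane : ∀ᵐ ξ ∂μ, ξ ≠ z := by
    rw [ae_iff]
    simp only [ne_eq, not_not, Set.setOf_eq_eq_singleton]
    exact hz0
  set B : ℝ := H ^ 2 * (M / r₀) ^ (2 * α) with hBdef
  have hB0 : 0 ≤ B := by positivity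
  -- a.e. pointwise bound
  have hae : ∀ᵐ ξ ∂μ, ENNReal.ofReal (‖φ (f ξ) - c‖ ^ 2)
      ≤ ENNReal.ofReal B * ENNReal.ofReal (dist z ξ ^ (-(2 * α))) := by
    filter_upwards [hane] with ξ hξ
    have hd : 0 < dist z ξ := dist_pos.mpr (Ne.symm hξ)
    have step1 : dist (f ξ) (f ξ₀) ≤ M / (dist z ξ * dist z ξ₀) := by
      rw [le_div_iff₀ (by positivity)]
      calc dist (f ξ) (f ξ₀) * (dist z ξ * dist z ξ₀)
          = dist (f ξ) (f ξ₀) * dist z ξ * dist z ξ₀ := by ring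
        _ ≤ M := hM ξ ξ₀
    have step2 : dist (f ξ) (f ξ₀) ≤ M / r₀ * (dist z ξ)⁻¹ := by
      refine step1.trans ?_
      have h1 : M / (dist z ξ * dist z ξ₀) ≤ M / (dist z ξ * r₀) :=
        div_le_div_of_nonneg_left hM0 (by positivity)
          (mul_le_mul_of_nonneg_left hξ₀.le hd.le)
      have h2 : M / (dist z ξ * r₀) = M / r₀ * (dist z ξ)⁻¹ := by
        rw [mul_comm, ← div_div, div_eq_mul_inv (M / r₀)]
      linarith
    have step3 : ‖φ (f ξ) - c‖ ≤ H * ((M / r₀) ^ α * dist z ξ ^ (-α)) := by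
      have h1 : dist (f ξ) (f ξ₀) ^ α ≤ (M / r₀ * (dist z ξ)⁻¹) ^ α :=
        Real.rpow_le_rpow dist_nonneg step2 hα.le
      have h2 : (M / r₀ * (dist z ξ)⁻¹) ^ α = (M / r₀) ^ α * dist z ξ ^ (-α) := by
        rw [Real.mul_rpow (by positivity) (by positivity), Real.inv_rpow hd.le,
          ← Real.rpow_neg hd.le]
      calc ‖φ (f ξ) - c‖ ≤ H * dist (f ξ) (f ξ₀) ^ α := hHol _ _
        _ ≤ H * ((M / r₀) ^ α * dist z ξ ^ (-α)) := by
            rw [← h2]; exact mul_le_mul_of_nonneg_left h1 hH0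
    have step4 : ‖φ (f ξ) - c‖ ^ 2 ≤ B * dist z ξ ^ (-(2 * α)) := by
      have h1 : ‖φ (f ξ) - c‖ ^ 2 ≤ (H * ((M / r₀) ^ α * dist z ξ ^ (-α))) ^ 2 :=
        pow_le_pow_left₀ (norm_nonneg _) step3 2
      have h2 : ((M / r₀ : ℝ) ^ α) ^ 2 = (M / r₀) ^ (2 * α) := by
        rw [← Real.rpow_natCast ((M / r₀ : ℝ) ^ α) 2, ← Real.rpow_mul (by positivity)]
        norm_num [mul_comm]
      have h3 : ((dist z ξ : ℝ) ^ (-α)) ^ 2 = dist z ξ ^ (-(2 * α)) := by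
        rw [← Real.rpow_natCast ((dist z ξ : ℝ) ^ (-α)) 2, ← Real.rpow_mul hd.le]
        norm_num
        ring_nf
      calc ‖φ (f ξ) - c‖ ^ 2 ≤ (H * ((M / r₀) ^ α * dist z ξ ^ (-α))) ^ 2 := h1
        _ = H ^ 2 * (((M / r₀ : ℝ) ^ α) ^ 2 * (((dist z ξ : ℝ) ^ (-α)) ^ 2)) := by ring
        _ = B * dist z ξ ^ (-(2 * α)) := by rw [h2, h3, hBdef]; ring
    calc ENNReal.ofReal (‖φ (f ξ) - c‖ ^ 2)
        ≤ ENNReal.ofReal (B * dist z ξ ^ (-(2 * α))) := ENNReal.ofReal_le_ofReal step4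
      _ = ENNReal.ofReal B * ENNReal.ofReal (dist z ξ ^ (-(2 * α))) :=
          ENNReal.ofReal_mul hB0
  -- put it together
  have hvar := var_le_moment2 μ (fun ξ => φ (f ξ)) hg hg2 c
  have hmeas2 : AEStronglyMeasurable (fun ξ => ‖φ (f ξ) - c‖ ^ 2) μ :=
    (((hgm.sub_const c).norm.pow_const 2)).aestronglyMeasurable
  have heq : ∫ ξ, ‖φ (f ξ) - c‖ ^ 2 ∂μ
      = (∫⁻ ξ, ENNReal.ofReal (‖φ (f ξ) - c‖ ^ 2) ∂μ).toReal :=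
    integral_eq_lintegral_of_nonneg_ae (Filter.Eventually.of_forall fun ξ => by positivity)
      hmeas2
  have hkey := lintegral_dist_rpow_le μ C Q α hC hQ hα hαQ z (fun r hr => hreg z r hr)
  have hlin : ∫⁻ ξ, ENNReal.ofReal (‖φ (f ξ) - c‖ ^ 2) ∂μ
      ≤ ENNReal.ofReal (B * KR) := by
    calc ∫⁻ ξ, ENNReal.ofReal (‖φ (f ξ) - c‖ ^ 2) ∂μ
        ≤ ∫⁻ ξ, ENNReal.ofReal B * ENNReal.ofReal (dist z ξ ^ (-(2 * α))) ∂μ :=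
          lintegral_mono_ae hae
      _ = ENNReal.ofReal B * ∫⁻ ξ, ENNReal.ofReal (dist z ξ ^ (-(2 * α))) ∂μ :=
          lintegral_const_mul' _ _ ENNReal.ofReal_ne_top
      _ ≤ ENNReal.ofReal B * ENNReal.ofReal KR := mul_le_mul_right hkey _
      _ = ENNReal.ofReal (B * KR) := (ENNReal.ofReal_mul hB0).symm
  have hint2 : ∫ ξ, ‖φ (f ξ) - c‖ ^ 2 ∂μ ≤ B * KR := by
    rw [heq]
    calc (∫⁻ ξ, ENNReal.ofReal (‖φ (f ξ) - c‖ ^ 2) ∂μ).toReal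
        ≤ (ENNReal.ofReal (B * KR)).toReal :=
          ENNReal.toReal_mono ENNReal.ofReal_ne_top hlin
      _ = B * KR := ENNReal.toReal_ofReal (by positivity)
  have hfinal : B * KR = (r₀⁻¹) ^ (2 * α) * KR * H ^ 2 * M ^ (2 * α) := by
    rw [hBdef, div_eq_mul_inv, Real.mul_rpow hM0 (by positivity)]
    ring
  linarith [hvar, hint2, hfinal ▸ hint2]
end

section
/- Let (Y,d) be a compact metric space with a Borel probability measure μ, and let C, Q > 0 be constants with μ(closedBall(x,r)) ≤ C·r^Q for every x ∈ Y and r > 0. Let ω ∈ Y, let (f_n) be a sequence of Borel measurable maps Y → Y, let (z_n) be a sequence in Y, and let (a_n) be a sequence of nonnegative reals converging to 0 such that d(f_n ξ, ω)·d(z_n, ξ) ≤ a_n for all ξ ∈ Y and all n. Then for every continuous φ: Y → ℝ, ∫_Y φ(f_n ξ) dμ(ξ) → φ(ω) as n → ∞; that is, the pushforward measures (f_n)_*μ converge weakly to the Dirac measure δ_ω. -/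
open MeasureTheory Filter Topology

/-- Weak convergence of pushforwards to a Dirac measure.
On a compact metric space with the upper Ahlfors-regularity bound `μ(B̄(x,r)) ≤ C·r^Q`,
if Borel maps `f_n : Y → Y`, points `z_n ∈ Y` and nonnegative reals `a_n → 0` satisfy
`d(f_n ξ, ω)·d(z_n, ξ) ≤ a_n` for all `ξ` and `n`, then for every continuous
`φ : Y → ℝ` one has `∫ φ(f_n ξ) dμ(ξ) → φ(ω)`, i.e. `(f_n)_*μ → δ_ω` weakly. -/
theorem pushforward_tendsto_dirac
    {Y : Type*} [MetricSpace Y] [CompactSpace Y] [MeasurableSpace Y] [BorelSpace Y]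
    (μ : Measure Y) [IsProbabilityMeasure μ]
    (C Q : ℝ) (hC : 0 < C) (hQ : 0 < Q)
    (hreg : ∀ (x : Y) (r : ℝ), 0 < r →
      μ (Metric.closedBall x r) ≤ ENNReal.ofReal (C * r ^ Q))
    (ω : Y) (f : ℕ → Y → Y) (hf : ∀ n, Measurable (f n)) (z : ℕ → Y)
    (a : ℕ → ℝ) (ha0 : ∀ n, 0 ≤ a n) (ha : Tendsto a atTop (𝓝 0))
    (hbound : ∀ (n : ℕ) (ξ : Y), dist (f n ξ) ω * dist (z n) ξ ≤ a n) :
    ∀ φ : C(Y, ℝ), Tendsto (fun n => ∫ ξ, φ (f n ξ) ∂μ) atTop (𝓝 (φ ω)) := by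
  intro φ
  have hMb : ∀ y : Y, |φ y| ≤ ‖φ‖ := fun y => by
    simpa [Real.norm_eq_abs] using φ.norm_coe_le_norm y
  have hM0 : (0:ℝ) ≤ ‖φ‖ := norm_nonneg _
  have h_int : ∀ n, Integrable (fun ξ => φ (f n ξ)) μ := fun n =>
    ⟨(φ.continuous.measurable.comp (hf n)).aestronglyMeasurable,
     HasFiniteIntegral.of_bounded (C := ‖φ‖)
       (Filter.Eventually.of_forall fun ξ => by
         simpa [Real.norm_eq_abs] using hMb (f n ξ))⟩
  rw [Metric.tendsto_atTop]
  intro ε hε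
  obtain ⟨δ, hδ, hδφ⟩ := Metric.continuous_iff.mp φ.continuous ω (ε/2) (by positivity)
  set r : ℕ → ℝ := fun n => a n / δ + 1/(n+1) with hr_def
  have hr : ∀ n, 0 < r n := fun n => by
    have h1 : (0:ℝ) ≤ a n / δ := div_nonneg (ha0 n) hδ.le
    have h2 : (0:ℝ) < 1/(n+1) := by positivity
    simp only [hr_def]; linarith
  set S : ℕ → Set Y := fun n => {ξ | δ ≤ dist (f n ξ) ω} with hS_def
  have hSmeas : ∀ n, MeasurableSet (S n) := fun n =>
    measurableSet_le measurable_const ((hf n).dist measurable_const)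
  have hμS : ∀ n, (μ (S n)).toReal ≤ C * r n ^ Q := by
    intro n
    have hsub : S n ⊆ Metric.closedBall (z n) (r n) := by
      intro ξ hξ
      have hb := hbound n ξ
      have hξ' : δ ≤ dist (f n ξ) ω := hξ
      have h1 : δ * dist (z n) ξ ≤ a n :=
        le_trans (mul_le_mul_of_nonneg_right hξ' dist_nonneg) hb
      have h2 : dist (z n) ξ ≤ a n / δ := (le_div_iff₀' hδ).mpr h1
      have h3 : (0:ℝ) < 1/(n+1) := by positivity
      have : dist ξ (z n) ≤ r n := by
        rw [dist_comm]; simp only [hr_def]; linarith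
      exact this
    have hle : μ (S n) ≤ ENNReal.ofReal (C * r n ^ Q) :=
      le_trans (measure_mono hsub) (hreg (z n) (r n) (hr n))
    exact ENNReal.toReal_le_of_le_ofReal
      (mul_nonneg hC.le (Real.rpow_nonneg (hr n).le Q)) hle
  -- pointwise bound and integral bound
  have hbound_int : ∀ n,
      |(∫ ξ, φ (f n ξ) ∂μ) - φ ω| ≤ ε/2 + 2 * ‖φ‖ * (μ (S n)).toReal := by
    intro n
    have hconst : (∫ _ : Y, φ ω ∂μ) = φ ω := by
      simp [integral_const, measure_univ]
    have h1 : |(∫ ξ, φ (f n ξ) ∂μ) - φ ω| ≤ ∫ ξ, |φ (f n ξ) - φ ω| ∂μ := by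
      rw [← hconst, ← integral_sub (h_int n) (integrable_const _)]
      simpa [Real.norm_eq_abs] using
        norm_integral_le_integral_norm (fun ξ => φ (f n ξ) - φ ω) (μ := μ)
    have hpt : ∀ ξ, |φ (f n ξ) - φ ω| ≤
        ε/2 + (S n).indicator (fun _ => 2 * ‖φ‖) ξ := by
      intro ξ
      by_cases h : δ ≤ dist (f n ξ) ω
      · have hmem : ξ ∈ S n := h
        rw [Set.indicator_of_mem hmem]
        have := abs_sub (φ (f n ξ)) (φ ω)
        have h1 := hMb (f n ξ); have h2 := hMb ω
        have : |φ (f n ξ) - φ ω| ≤ |φ (f n ξ)| + |φ ω| := abs_sub _ _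
        linarith
      · have hmem : ξ ∉ S n := h
        rw [Set.indicator_of_notMem hmem]
        have := hδφ (f n ξ) (lt_of_not_ge h)
        rw [Real.dist_eq] at this
        linarith
    have hint2 : Integrable (fun ξ =>
        ε/2 + (S n).indicator (fun _ => 2 * ‖φ‖) ξ) μ :=
      (integrable_const _).add ((integrable_const _).indicator (hSmeas n))
    have h2 : (∫ ξ, |φ (f n ξ) - φ ω| ∂μ) ≤
        ∫ ξ, (ε/2 + (S n).indicator (fun _ => 2 * ‖φ‖) ξ) ∂μ := by
      refine integral_mono ?_ hint2 hpt
      exact ((h_int n).sub (integrable_const _)).abs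
    have h3 : (∫ ξ, (ε/2 + (S n).indicator (fun _ => 2 * ‖φ‖) ξ) ∂μ)
        = ε/2 + 2 * ‖φ‖ * (μ (S n)).toReal := by
      rw [integral_add (integrable_const _) ((integrable_const _).indicator (hSmeas n)),
        integral_const, integral_indicator_const _ (hSmeas n)]
      simp [measure_univ, mul_comm, Measure.real]
    linarith [h1, h2, h3 ▸ h2]
  -- the upper bound tends to ε/2
  have hrt : Tendsto r atTop (𝓝 0) := by
    have h1 : Tendsto (fun n => a n / δ) atTop (𝓝 0) := by
      simpa using ha.div_const δ
    have h2 : Tendsto (fun n : ℕ => 1/((n:ℝ)+1)) atTop (𝓝 0) :=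
      tendsto_one_div_add_atTop_nhds_zero_nat
    have := h1.add h2
    rw [hr_def]
    simpa [one_div] using this
  have hrQ : Tendsto (fun n => r n ^ Q) atTop (𝓝 0) := by
    have hcont := (Real.continuousAt_rpow_const 0 Q (Or.inr hQ.le)).tendsto
    have := hcont.comp hrt
    simpa [Real.zero_rpow hQ.ne', Function.comp_def] using this
  have hu : Tendsto (fun n => ε/2 + 2 * ‖φ‖ * (C * r n ^ Q)) atTop (𝓝 (ε/2)) := by
    have := (tendsto_const_nhds (x := ε/2)).add
      (((hrQ.const_mul C).const_mul (2 * ‖φ‖)))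
    simpa using this
  have hev : ∀ᶠ n in atTop, ε/2 + 2 * ‖φ‖ * (C * r n ^ Q) < ε :=
    hu.eventually_lt_const (by linarith)
  obtain ⟨N, hN⟩ := eventually_atTop.mp hev
  refine ⟨N, fun n hn => ?_⟩
  rw [Real.dist_eq]
  have hge : 2 * ‖φ‖ * (μ (S n)).toReal ≤ 2 * ‖φ‖ * (C * r n ^ Q) :=
    mul_le_mul_of_nonneg_left (hμS n) (by positivity)
  calc |(∫ ξ, φ (f n ξ) ∂μ) - φ ω| ≤ ε/2 + 2 * ‖φ‖ * (μ (S n)).toReal := hbound_int n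
    _ ≤ ε/2 + 2 * ‖φ‖ * (C * r n ^ Q) := by linarith
    _ < ε := hN n hn
end
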